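/- For a weak composition μ = (a_1,…,a_n) of n, MacMahon's formula holds: ∑_{m ≥ 0} ∏_{i=1}^{n} C(m + a_i, a_i) · t^m = (∑_{w ∈ S_μ} t^{des(w)}) / (1−t)^{n+1}, where S_μ is the set of permutations of the multiset with a_i copies of i and des(w) counts descents of w. -/

import Mathlib

open Finset PowerSeries

/-- The number of descents of a word given as a list: indices `i` with `l_i > l_{i+1}`. -/
def des (l : List ℕ) : ℕ := (l.zip l.tail).countP (fun p => p.2 < p.1)

lemma countP_ofFn {α : Type*} (p : α → Bool) : ∀ {j : ℕ} (g : Fin j → α),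
    (List.ofFn g).countP p = (univ.filter fun i => p (g i)).card := by
  intro j
  induction j with
  | zero => intro g; simp
  | succ j ih =>
    intro g
    rw [List.ofFn_succ, List.countP_cons, ih]
    rw [Finset.card_filter, Finset.card_filter, Fin.sum_univ_succ]
    by_cases h : p (g 0) <;> simp [h, Function.comp] <;> omega

lemma zip_tail_ofFn {α : Type*} {j : ℕ} (f : Fin (j+1) → α) :
    (List.ofFn f).zip (List.ofFn f).tail
      = List.ofFn (fun i : Fin j => (f i.castSucc, f i.succ)) := by
  apply List.ext_getElem
  · simp
  · intro i h1 h2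
    simp only [List.getElem_zip, List.getElem_ofFn, List.getElem_tail]
    congr 1 <;> exact congrArg f (by ext; simp)

lemma des_ofFn {j : ℕ} (f : Fin (j+1) → ℕ) :
    des (List.ofFn f) = (univ.filter fun i : Fin j => f i.succ < f i.castSucc).card := by
  rw [des, zip_tail_ofFn, countP_ofFn]
  congr 1
  ext i
  simp

noncomputable def monoEquivSym (α : Type*) [LinearOrder α] (k : ℕ) :
    {f : Fin k → α // Monotone f} ≃ Sym α k where
  toFun f := ⟨(List.ofFn f.1 : Multiset α), by simp⟩
  invFun s := ⟨fun i => (Multiset.sort s.1 (· ≤ ·)).get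
      (Fin.cast (show k = (Multiset.sort s.1 (· ≤ ·)).length by simp [s.2]) i), by
    intro i j hij
    exact List.Pairwise.rel_get_of_le (Multiset.pairwise_sort _ _) (by exact hij)⟩
  left_inv f := by
    have hs : Multiset.sort (↑(List.ofFn f.1) : Multiset α) (· ≤ ·) = List.ofFn f.1 :=
      List.Perm.eq_of_pairwise' (Multiset.pairwise_sort _ _) f.2.sortedLE_ofFn.pairwise
        (Multiset.coe_eq_coe.mp (Multiset.sort_eq _ _))
    apply Subtype.ext
    funext i
    show (Multiset.sort (↑(List.ofFn f.1) : Multiset α) (· ≤ ·)).get _ = f.1 i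
    rw [List.get_eq_getElem]
    simp only [hs, List.getElem_ofFn]
    exact congrArg f.1 (by ext; rfl)
  right_inv s := by
    apply Subtype.ext
    show (↑(List.ofFn fun i : Fin k => (Multiset.sort s.1 (· ≤ ·)).get
        (Fin.cast (show k = (Multiset.sort s.1 (· ≤ ·)).length by simp [s.2]) i)) : Multiset α) = s.1
    have : List.ofFn (fun i : Fin k => (Multiset.sort s.1 (· ≤ ·)).get
        (Fin.cast (show k = (Multiset.sort s.1 (· ≤ ·)).length by simp [s.2]) i))
        = Multiset.sort s.1 (· ≤ ·) := by
      apply List.ext_getElem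
      · simp [s.2]
      · intro i h1 h2
        simp
        rfl
    rw [this, Multiset.sort_eq]

lemma card_monoFn (k b : ℕ) :
    Fintype.card {e : Fin k → Fin (b+1) // Monotone e} = (b + k).choose k := by
  rw [Fintype.card_congr (monoEquivSym (Fin (b+1)) k), Sym.card_sym_eq_choose]
  simp

lemma filter_lt_succ (D : Finset ℕ) (j : ℕ) :
    (D.filter (· < j+1)).card = (D.filter (· < j)).card + (if j ∈ D then 1 else 0) := by
  by_cases hj : j ∈ D
  · rw [if_pos hj]
    have h1 : D.filter (· < j+1) = insert j (D.filter (· < j)) := by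
      ext x
      simp only [Finset.mem_filter, Finset.mem_insert]
      constructor
      · rintro ⟨hx, hlt⟩
        rcases Nat.lt_or_ge x j with h | h
        · exact Or.inr ⟨hx, h⟩
        · exact Or.inl (by omega)
      · rintro (rfl | ⟨hx, hlt⟩)
        · exact ⟨hj, by omega⟩
        · exact ⟨hx, by omega⟩
    rw [h1, Finset.card_insert_of_notMem (by simp)]
  · rw [if_neg hj, add_zero]
    congr 1
    ext x
    simp only [Finset.mem_filter]
    constructor
    · rintro ⟨hx, hlt⟩
      refine ⟨hx, ?_⟩
      rcases Nat.lt_or_ge x j with h | h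
      · exact h
      · exfalso; have : x = j := by omega
        exact hj (this ▸ hx)
    · rintro ⟨hx, hlt⟩; exact ⟨hx, by omega⟩

section chain

variable {k m : ℕ} (D : Finset ℕ)

/-- running count of descents strictly below `j` -/
def cfn (j : ℕ) : ℕ := (D.filter (· < j)).card

lemma cfn_zero : cfn D 0 = 0 := by simp [cfn]
lemma cfn_succ (j : ℕ) : cfn D (j+1) = cfn D j + (if j ∈ D then 1 else 0) :=
  filter_lt_succ D j
lemma cfn_mono {i j : ℕ} (hij : i ≤ j) : cfn D i ≤ cfn D j := by
  apply Finset.card_le_card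
  intro x hx
  simp only [Finset.mem_filter] at *
  exact ⟨hx.1, by omega⟩
lemma cfn_top (hD : ∀ j ∈ D, j < k) : cfn D k = D.card := by
  unfold cfn; congr 1; apply Finset.filter_true_of_mem; intro x hx; exact hD x hx
lemma cfn_le_card : ∀ j, cfn D j ≤ D.card := fun j => Finset.card_filter_le _ _

lemma chain_ineq (e : Fin (k+1) → Fin (m+1)) (hmono : Monotone e)
    (hstr : ∀ i : Fin k, (i : ℕ) ∈ D → e i.castSucc < e i.succ) :
    ∀ j (hj : j ≤ k) i (hi : i ≤ j),
      (e ⟨i, by omega⟩ : ℕ) + cfn D j ≤ (e ⟨j, by omega⟩ : ℕ) + cfn D i := by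
  intro j
  induction j with
  | zero =>
    intro _ i hi
    have : i = 0 := by omega
    subst this; simp
  | succ j ih =>
    intro hj i hi
    rcases Nat.eq_or_lt_of_le hi with rfl | hlt
    · simp
    · have hi' : i ≤ j := by omega
      have h1 := ih (by omega) i hi'
      have hcs : cfn D (j+1) = cfn D j + (if j ∈ D then 1 else 0) := cfn_succ D j
      have hjk : j < k := by omega
      have hmle : (e ⟨j, by omega⟩ : ℕ) ≤ (e ⟨j+1, by omega⟩ : ℕ) := by
        have := hmono (show (⟨j, by omega⟩ : Fin (k+1)) ≤ ⟨j+1, by omega⟩ by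
          simp [Fin.le_def])
        exact this
      by_cases hD : j ∈ D
      · have hst := hstr ⟨j, hjk⟩ hD
        have hst' : (e ⟨j, by omega⟩ : ℕ) < (e ⟨j+1, by omega⟩ : ℕ) := hst
        rw [hcs, if_pos hD]
        omega
      · rw [hcs, if_neg hD]
        omega

end chain
lemma card_ES (k m : ℕ) (D : Finset ℕ) (hD : ∀ j ∈ D, j < k) :
    Fintype.card {e : Fin (k+1) → Fin (m+1) // Monotone e ∧
        ∀ i : Fin k, (i : ℕ) ∈ D → e i.castSucc < e i.succ}
      = if D.card ≤ m then (k + 1 + (m - D.card)).choose (k+1) else 0 := by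
  have fact : ∀ (e : Fin (k+1) → Fin (m+1)), Monotone e →
      (∀ i : Fin k, (i : ℕ) ∈ D → e i.castSucc < e i.succ) →
      ∀ i : Fin (k+1), cfn D i ≤ (e i : ℕ) ∧ (e i : ℕ) + D.card ≤ m + cfn D i := by
    intro e hm hs i
    constructor
    · have h := chain_ineq D e hm hs i.val (by omega) 0 (by omega)
      have h0 : cfn D 0 = 0 := cfn_zero D
      have : (e ⟨(i : ℕ), by omega⟩ : ℕ) = (e i : ℕ) := by congr
      omega
    · have h := chain_ineq D e hm hs k (le_refl k) i.val (by omega)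
      have htop : cfn D k = D.card := cfn_top D hD
      have hlt : (e ⟨k, by omega⟩ : ℕ) < m + 1 := (e ⟨k, by omega⟩).isLt
      have : (e ⟨(i : ℕ), by omega⟩ : ℕ) = (e i : ℕ) := by congr
      omega
  by_cases hdm : D.card ≤ m
  · rw [if_pos hdm]
    have hcard : Fintype.card {e : Fin (k+1) → Fin (m+1) // Monotone e ∧
        ∀ i : Fin k, (i : ℕ) ∈ D → e i.castSucc < e i.succ}
        = Fintype.card {e' : Fin (k+1) → Fin (m - D.card + 1) // Monotone e'} := by
      apply Fintype.card_eq.2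
      constructor
      refine
        { toFun := fun e => ⟨fun i => ⟨(e.1 i : ℕ) - cfn D i, ?_⟩, ?_⟩
          invFun := fun e' => ⟨fun i => ⟨(e'.1 i : ℕ) + cfn D i, ?_⟩, ?_, ?_⟩
          left_inv := ?_
          right_inv := ?_ }
      · have := fact e.1 e.2.1 e.2.2 i
        omega
      · intro i j hij
        rw [Fin.mk_le_mk]
        have h1 := fact e.1 e.2.1 e.2.2 i
        have h2 := fact e.1 e.2.1 e.2.2 j
        have h := chain_ineq D e.1 e.2.1 e.2.2 j.val (by omega) i.val
          (by rw [Fin.le_def] at hij; omega)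
        have hi : (e.1 ⟨(i : ℕ), by omega⟩ : ℕ) = (e.1 i : ℕ) := by congr
        have hj : (e.1 ⟨(j : ℕ), by omega⟩ : ℕ) = (e.1 j : ℕ) := by congr
        omega
      · have h1 : (e'.1 i : ℕ) < m - D.card + 1 := (e'.1 i).isLt
        have h2 := cfn_le_card D (i : ℕ)
        omega
      · intro i j hij
        rw [Fin.mk_le_mk]
        have h1 : (e'.1 i : ℕ) ≤ (e'.1 j : ℕ) := e'.2 hij
        have h2 := cfn_mono D (show (i:ℕ) ≤ (j:ℕ) by rw [Fin.le_def] at hij; omega)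
        omega
      · intro i hiD
        rw [Fin.mk_lt_mk]
        have h1 : (e'.1 i.castSucc : ℕ) ≤ (e'.1 i.succ : ℕ) := e'.2 i.castSucc_le_succ
        have h2 := cfn_succ D (i : ℕ)
        rw [if_pos hiD] at h2
        have h3 : ((i.castSucc : Fin (k+1)) : ℕ) = (i : ℕ) := by simp
        have h4 : ((i.succ : Fin (k+1)) : ℕ) = (i : ℕ) + 1 := by simp
        rw [h3, h4]
        omega
      · intro e
        apply Subtype.ext
        funext i
        apply Fin.ext
        have := fact e.1 e.2.1 e.2.2 i
        simp only []
        omega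
      · intro e'
        apply Subtype.ext
        funext i
        apply Fin.ext
        simp only []
        omega
    rw [hcard, card_monoFn, Nat.add_comm]
  · rw [if_neg hdm]
    rw [Fintype.card_eq_zero_iff]
    constructor
    rintro ⟨e, hm, hs⟩
    have := fact e hm hs ⟨0, by omega⟩
    have h0 : cfn D 0 = 0 := cfn_zero D
    omega

-- the monoEquivSym application lemma (true by definition)
lemma monoEquivSym_apply {α : Type*} [LinearOrder α] {k : ℕ} (f : {f : Fin k → α // Monotone f}) :
    Sym.toMultiset (monoEquivSym α k f) = ↑(List.ofFn f.1) := rfl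

lemma mcard_sum {α β : Type*} (s : Finset β) (f : β → Multiset α) :
    Multiset.card (∑ b ∈ s, f b) = ∑ b ∈ s, Multiset.card (f b) := by
  classical
  induction s using Finset.cons_induction with
  | empty => simp
  | cons b s hb ih => rw [Finset.sum_cons, Finset.sum_cons, Multiset.card_add, ih]

lemma mfilter_sum {α β : Type*} (p : α → Prop) [DecidablePred p] (s : Finset β)
    (f : β → Multiset α) :
    Multiset.filter p (∑ b ∈ s, f b) = ∑ b ∈ s, Multiset.filter p (f b) := by
  classical
  induction s using Finset.cons_induction with
  | empty => simp
  | cons b s hb ih => rw [Finset.sum_cons, Finset.sum_cons, Multiset.filter_add, ih]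

section claim1
variable (m n : ℕ) (a : Fin n → ℕ)

lemma msum_filter_eq (s : Multiset (Fin (m+1) ×ₗ Fin n)) :
    ∑ v : Fin n, Multiset.filter (fun x => (ofLex x).2 = v) s = s := by
  ext x
  rw [Multiset.count_sum']
  simp only [Multiset.count_filter]
  rw [Finset.sum_ite_eq univ ((ofLex x).2) (fun _ => Multiset.count x s)]
  simp

lemma flt (v v' : Fin n) (t : Multiset (Fin (m+1))) :
    Multiset.filter (fun x => (ofLex x).2 = v) (Multiset.map (fun b => toLex (b, v')) t)
      = if v' = v then Multiset.map (fun b => toLex (b, v')) t else 0 := by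
  rw [Multiset.filter_map]
  by_cases h : v' = v
  · rw [if_pos h]
    congr 1
    apply Multiset.filter_eq_self.2
    intro x _
    simp [Function.comp, h]
  · rw [if_neg h]
    rw [Multiset.filter_eq_nil.2]
    · simp
    · intro x _
      simp [Function.comp, h]

noncomputable def claim1equiv (hsum : ∑ v, a v = n) :
    {s : Sym (Fin (m+1) ×ₗ Fin n) n //
        ∀ v, Multiset.card (Multiset.filter (fun x => (ofLex x).2 = v) s.toMultiset) = a v}
      ≃ ∀ v, Sym (Fin (m+1)) (a v) where
  toFun s v := ⟨Multiset.map (fun x => (ofLex x).1)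
      (Multiset.filter (fun x => (ofLex x).2 = v) s.1.toMultiset), by
    rw [Multiset.card_map]; exact s.2 v⟩
  invFun t := ⟨⟨∑ v, Multiset.map (fun b => toLex (b, v)) (t v).toMultiset, by
      rw [mcard_sum]
      simp only [Multiset.card_map]
      exact (Finset.sum_congr rfl fun v _ => (t v).2).trans hsum⟩, by
    intro v
    show Multiset.card (Multiset.filter (fun x => (ofLex x).2 = v)
      (∑ v, Multiset.map (fun b => toLex (b, v)) (t v).toMultiset)) = a v
    rw [mfilter_sum]
    simp only [flt]
    rw [Finset.sum_ite_eq' univ v]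
    simp [Multiset.card_map, (t v).2]⟩
  left_inv s := by
    apply Subtype.ext
    apply Subtype.ext
    show ∑ v : Fin n, Multiset.map (fun b => toLex (b, v))
        (Multiset.map (fun x => (ofLex x).1)
          (Multiset.filter (fun x => (ofLex x).2 = v) s.1.toMultiset))
      = s.1.toMultiset
    have key : ∀ v : Fin n, Multiset.map (fun b => toLex (b, v))
        (Multiset.map (fun x => (ofLex x).1)
          (Multiset.filter (fun x => (ofLex x).2 = v) s.1.toMultiset))
        = Multiset.filter (fun x => (ofLex x).2 = v) s.1.toMultiset := by
      intro v
      rw [Multiset.map_map]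
      rw [show Multiset.map ((fun b => toLex (b, v)) ∘ fun x => (ofLex x).1)
            (Multiset.filter (fun x => (ofLex x).2 = v) s.1.toMultiset)
          = Multiset.map id (Multiset.filter (fun x => (ofLex x).2 = v) s.1.toMultiset) from
        Multiset.map_congr rfl (fun x hx => by
          have hx2 : (ofLex x).2 = v := (Multiset.mem_filter.mp hx).2
          show toLex ((ofLex x).1, v) = x
          rw [← hx2]
          rfl)]
      rw [Multiset.map_id]
    rw [Finset.sum_congr rfl (fun v _ => key v), msum_filter_eq]
  right_inv t := by
    funext v
    apply Subtype.ext
    show Multiset.map (fun x => (ofLex x).1)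
        (Multiset.filter (fun x => (ofLex x).2 = v)
          (∑ v' : Fin n, Multiset.map (fun b => toLex (b, v')) (t v').toMultiset))
      = (t v).toMultiset
    rw [mfilter_sum]
    simp only [flt]
    rw [Finset.sum_ite_eq' univ v]
    simp only [mem_univ, if_true]
    rw [Multiset.map_map]
    rw [show Multiset.map ((fun x => (ofLex x).1) ∘ fun b => toLex (b, v)) (t v).toMultiset
        = Multiset.map id (t v).toMultiset from Multiset.map_congr rfl (fun x _ => rfl)]
    rw [Multiset.map_id]

lemma claim1 (hsum : ∑ v, a v = n) :
    Fintype.card {g : Fin n → Fin (m+1) ×ₗ Fin n // Monotone g ∧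
        ∀ v, (univ.filter fun i => (ofLex (g i)).2 = v).card = a v}
      = ∏ v, (m + a v).choose (a v) := by
  have e1 := (Equiv.subtypeSubtypeEquivSubtypeInter
    (fun g : Fin n → Fin (m+1) ×ₗ Fin n => Monotone g)
    (fun g => ∀ v, (univ.filter fun i => (ofLex (g i)).2 = v).card = a v)).symm
  have e2 := Equiv.subtypeEquiv (monoEquivSym (Fin (m+1) ×ₗ Fin n) n)
    (p := fun f : {g : Fin n → Fin (m+1) ×ₗ Fin n // Monotone g} =>
      ∀ v, (univ.filter fun i => (ofLex (f.1 i)).2 = v).card = a v)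
    (q := fun s : Sym (Fin (m+1) ×ₗ Fin n) n =>
      ∀ v, Multiset.card (Multiset.filter (fun x => (ofLex x).2 = v) s.toMultiset) = a v)
    (by
      intro f
      apply forall_congr'
      intro v
      rw [monoEquivSym_apply]
      rw [show (↑(List.ofFn f.1) : Multiset (Fin (m+1) ×ₗ Fin n)).filter
            (fun x => (ofLex x).2 = v)
          = ↑((List.ofFn f.1).filter (fun x => decide ((ofLex x).2 = v))) from
        Multiset.filter_coe _ _]
      rw [Multiset.coe_card, ← List.countP_eq_length_filter, countP_ofFn]
      simp)
  have e3 := claim1equiv m n a hsum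
  rw [Fintype.card_congr ((e1.trans e2).trans e3), Fintype.card_pi]
  apply Finset.prod_congr rfl
  intro v _
  rw [Sym.card_sym_eq_choose]
  simp

end claim1
section claim2
variable {k m : ℕ}

def Dn (w : Fin (k+1) → Fin (k+1)) : Finset ℕ :=
  (univ.filter fun i : Fin k => w i.succ < w i.castSucc).map ⟨Fin.val, Fin.val_injective⟩

lemma mem_Dn (w : Fin (k+1) → Fin (k+1)) (i : Fin k) :
    (i : ℕ) ∈ Dn w ↔ w i.succ < w i.castSucc := by
  unfold Dn
  rw [Finset.mem_map]
  constructor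
  · rintro ⟨x, hx, hxv⟩
    have : x = i := Fin.val_injective hxv
    subst this
    exact (Finset.mem_filter.mp hx).2
  · intro h
    exact ⟨i, Finset.mem_filter.mpr ⟨mem_univ i, h⟩, rfl⟩

lemma Dn_lt (w : Fin (k+1) → Fin (k+1)) : ∀ j ∈ Dn w, j < k := by
  intro j hj
  rw [Dn, Finset.mem_map] at hj
  obtain ⟨x, _, rfl⟩ := hj
  exact x.isLt

lemma lex_le_fst {x y : Fin (m+1) ×ₗ Fin (k+1)} (h : x ≤ y) :
    (ofLex x).1 ≤ (ofLex y).1 := by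
  rw [← toLex_ofLex x, ← toLex_ofLex y, Prod.Lex.le_iff] at h
  rcases h with h | ⟨h, _⟩
  · exact le_of_lt h
  · exact le_of_eq h

lemma lex_le_snd {x y : Fin (m+1) ×ₗ Fin (k+1)} (h : x ≤ y)
    (hfst : (ofLex x).1 = (ofLex y).1) : (ofLex x).2 ≤ (ofLex y).2 := by
  rw [← toLex_ofLex x, ← toLex_ofLex y, Prod.Lex.le_iff] at h
  rcases h with h | ⟨_, h⟩
  · exact absurd hfst (ne_of_lt h)
  · exact h

noncomputable def fiberEquiv (w : Fin (k+1) → Fin (k+1)) (a : Fin (k+1) → ℕ)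
    (hP : ∀ v, (univ.filter fun i => w i = v).card = a v) :
    {g : {g : Fin (k+1) → Fin (m+1) ×ₗ Fin (k+1) // Monotone g ∧
        ∀ v, (univ.filter fun i => (ofLex (g i)).2 = v).card = a v} //
      (fun i => (ofLex (g.1 i)).2) = w}
    ≃ {e : Fin (k+1) → Fin (m+1) // Monotone e ∧
        ∀ i : Fin k, (i : ℕ) ∈ Dn w → e i.castSucc < e i.succ} where
  toFun g := ⟨fun i => (ofLex (g.1.1 i)).1, by
    constructor
    · intro i j hij
      exact lex_le_fst (g.1.2.1 hij)
    · intro i hiD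
      rw [mem_Dn] at hiD
      have hle := g.1.2.1 (Fin.castSucc_le_succ i)
      rcases lt_or_eq_of_le (lex_le_fst hle) with h | h
      · exact h
      · exfalso
        have h2 := lex_le_snd hle h
        have hc := congrFun g.2 i.castSucc
        have hs := congrFun g.2 i.succ
        rw [hc, hs] at h2
        exact absurd h2 (not_le_of_gt hiD)⟩
  invFun e := ⟨⟨fun i => toLex (e.1 i, w i), by
    constructor
    · rw [Fin.monotone_iff_le_succ]
      intro i
      rw [Prod.Lex.le_iff]
      by_cases hdesc : w i.succ < w i.castSucc
      · exact Or.inl (e.2.2 i ((mem_Dn w i).mpr hdesc))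
      · rcases lt_or_eq_of_le (e.2.1 (Fin.castSucc_le_succ i)) with h | h
        · exact Or.inl h
        · exact Or.inr ⟨h, le_of_not_gt hdesc⟩
    · intro v
      exact hP v⟩, by funext i; rfl⟩
  left_inv g := by
    apply Subtype.ext
    apply Subtype.ext
    funext i
    have h2 := congrFun g.2 i
    show toLex ((ofLex (g.1.1 i)).1, w i) = g.1.1 i
    rw [← h2]
    rfl
  right_inv e := by
    apply Subtype.ext
    funext i
    rfl

lemma claim2 (a : Fin (k+1) → ℕ) :
    Fintype.card {g : Fin (k+1) → Fin (m+1) ×ₗ Fin (k+1) // Monotone g ∧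
        ∀ v, (univ.filter fun i => (ofLex (g i)).2 = v).card = a v}
      = ∑ w ∈ univ.filter (fun w : Fin (k+1) → Fin (k+1) =>
            ∀ v, (univ.filter fun i => w i = v).card = a v),
          (if (univ.filter fun i : Fin k => w i.succ < w i.castSucc).card ≤ m
            then (k + 1 + (m - (univ.filter fun i : Fin k =>
              w i.succ < w i.castSucc).card)).choose (k+1) else 0) := by
  classical
  set Mt := {g : Fin (k+1) → Fin (m+1) ×ₗ Fin (k+1) // Monotone g ∧
        ∀ v, (univ.filter fun i => (ofLex (g i)).2 = v).card = a v} with hMt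
  have h1 : Fintype.card Mt = ∑ w : Fin (k+1) → Fin (k+1),
      Fintype.card {g : Mt // (fun i => (ofLex (g.1 i)).2) = w} := by
    rw [Fintype.card_congr (Equiv.sigmaFiberEquiv
      (fun g : Mt => (fun i => (ofLex (g.1 i)).2))).symm]
    rw [Fintype.card_sigma]
  rw [h1, Finset.sum_filter]
  apply Finset.sum_congr rfl
  intro w _
  by_cases hP : ∀ v, (univ.filter fun i => w i = v).card = a v
  · rw [if_pos hP]
    rw [Fintype.card_congr (fiberEquiv w a hP)]
    rw [card_ES k m (Dn w) (Dn_lt w)]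
    have : (Dn w).card = (univ.filter fun i : Fin k => w i.succ < w i.castSucc).card :=
      Finset.card_map _
    rw [this]
  · rw [if_neg hP]
    rw [Fintype.card_eq_zero_iff]
    constructor
    rintro ⟨⟨g, hm, hc⟩, rfl⟩
    exact hP hc

end claim2

lemma key (k m : ℕ) (a : Fin (k+1) → ℕ) (hsum : ∑ v, a v = k + 1) :
    ∏ v, (m + a v).choose (a v)
      = ∑ w ∈ univ.filter (fun w : Fin (k+1) → Fin (k+1) =>
            ∀ v, (univ.filter fun i => w i = v).card = a v),
          (if (univ.filter fun i : Fin k => w i.succ < w i.castSucc).card ≤ m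
            then (k + 1 + (m - (univ.filter fun i : Fin k =>
              w i.succ < w i.castSucc).card)).choose (k+1) else 0) := by
  rw [← claim1 m (k+1) a hsum, claim2 a]


theorem stmt_14 (n : ℕ) (hn : 0 < n) (a : Fin n → ℕ) (hsum : ∑ i, a i = n) :
    (PowerSeries.mk fun m => ∏ i, ((m + a i).choose (a i) : ℤ)) *
        (1 - PowerSeries.X) ^ (n + 1) =
      ∑ w ∈ Finset.univ.filter
          (fun w : Fin n → Fin n =>
            ∀ v : Fin n, (Finset.univ.filter (fun i => w i = v)).card = a v),
        (PowerSeries.X : PowerSeries ℤ) ^ des (List.ofFn fun i => (w i : ℕ) + 1) := by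
  obtain ⟨k, rfl⟩ : ∃ k, n = k + 1 := ⟨n - 1, by omega⟩
  set S := Finset.univ.filter
      (fun w : Fin (k+1) → Fin (k+1) =>
        ∀ v : Fin (k+1), (Finset.univ.filter (fun i => w i = v)).card = a v) with hS
  have hdes : ∀ w : Fin (k+1) → Fin (k+1),
      des (List.ofFn fun i => ((w i : ℕ) + 1))
        = (univ.filter fun i : Fin k => w i.succ < w i.castSucc).card := by
    intro w
    rw [des_ofFn]
    congr 1
    ext i
    simp only [Finset.mem_filter, mem_univ, true_and]
    omega
  have hsum' : ∑ v, a v = k + 1 := hsum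
  have hmk : (PowerSeries.mk fun m => ∏ i, ((m + a i).choose (a i) : ℤ))
      = (∑ w ∈ S, (PowerSeries.X : PowerSeries ℤ)
          ^ (univ.filter fun i : Fin k => w i.succ < w i.castSucc).card)
        * (invOneSubPow ℤ (k + 1 + 1)).val := by
    rw [invOneSubPow_val_succ_eq_mk_add_choose]
    ext mm
    rw [PowerSeries.coeff_mk, Finset.sum_mul, map_sum]
    rw [Finset.sum_congr rfl (fun w _ => PowerSeries.coeff_X_pow_mul'
      (PowerSeries.mk fun j => ((k + 1 + j).choose (k+1) : ℤ))
      ((univ.filter fun i : Fin k => w i.succ < w i.castSucc).card) mm)]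
    simp only [PowerSeries.coeff_mk]
    have hkey := key k mm a hsum'
    have h2 : ((∏ v, (mm + a v).choose (a v) : ℕ) : ℤ)
        = ((∑ w ∈ S, (if (univ.filter fun i : Fin k => w i.succ < w i.castSucc).card ≤ mm
            then (k + 1 + (mm - (univ.filter fun i : Fin k =>
              w i.succ < w i.castSucc).card)).choose (k+1) else 0) : ℕ) : ℤ) := by
      exact_mod_cast congrArg Nat.cast hkey
    push_cast at h2
    exact h2
  have hrw : (∑ w ∈ S, (PowerSeries.X : PowerSeries ℤ)
      ^ des (List.ofFn fun i => ((w i : ℕ) + 1)))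
      = ∑ w ∈ S, (PowerSeries.X : PowerSeries ℤ)
          ^ (univ.filter fun i : Fin k => w i.succ < w i.castSucc).card :=
    Finset.sum_congr rfl (fun w _ => by rw [hdes w])
  rw [hrw, hmk, mul_assoc, ← invOneSubPow_inv_eq_one_sub_pow,
    (invOneSubPow ℤ (k + 1 + 1)).val_inv, mul_one]
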